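/- Let β ∈ ℝ and α ∈ [0,1]. Then there exists C > 0 such that for all ε ∈ (0,1] and all u ∈ H^β, one has ‖D_ε u‖_{β−α} ≤ C ε^{α−1} ‖u‖_β. -/

import Mathlib

open MeasureTheory
open scoped BigOperators

/-- The squared Sobolev norm `‖u‖_σ² = Σ_{k∈ℤ} (1+k²)^σ |u_k|²` on Fourier coefficients. -/
noncomputable def sobNormSq (σ : ℝ) (a : ℤ → ℂ) : ℝ :=
  ∑' k : ℤ, (1 + (k : ℝ) ^ 2) ^ σ * ‖a k‖ ^ 2

/-- The Fourier transform `μ̂(ξ) = ∫ e^{iξy} μ(dy)` of the signed measure `μ = μp - μn`. -/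
noncomputable def muHat (μp μn : Measure ℝ) (ξ : ℝ) : ℂ :=
  (∫ y, Complex.exp (Complex.I * ξ * y) ∂μp) - ∫ y, Complex.exp (Complex.I * ξ * y) ∂μn

lemma norm_exp_I_mul_sub_one_le (t : ℝ) : ‖Complex.exp (Complex.I * t) - 1‖ ≤ |t| := by
  have h1 : Complex.exp (Complex.I * t) = Real.cos t + Real.sin t * Complex.I := by
    rw [mul_comm, Complex.exp_mul_I]
    simp [Complex.ofReal_cos, Complex.ofReal_sin]
  have hsq : ‖Complex.exp (Complex.I * t) - 1‖ ^ 2 = (Real.cos t - 1)^2 + (Real.sin t)^2 := by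
    rw [h1]
    simp [Complex.sq_norm, Complex.normSq_apply,
      Complex.cos_ofReal_re, Complex.sin_ofReal_re]
    ring
  have hs : Real.sin (t/2) ^ 2 ≤ (t/2)^2 := by
    rw [← _root_.sq_abs (Real.sin (t/2)), ← _root_.sq_abs (t/2)]
    exact pow_le_pow_left₀ (abs_nonneg _) (Real.abs_sin_le_abs (x := t/2)) 2
  have hid : Real.sin (t/2) ^2 + Real.cos (t/2)^2 = 1 := Real.sin_sq_add_cos_sq _
  have hc : Real.cos (t/2)^2 = 1 - Real.sin (t/2)^2 := by linarith
  have h2 : Real.sin t = 2 * Real.sin (t/2) * Real.cos (t/2) := by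
    rw [← Real.sin_two_mul]; ring_nf
  have h3 : Real.cos t = 2 * Real.cos (t/2)^2 - 1 := by
    rw [← Real.cos_two_mul]; ring_nf
  have hb : ‖Complex.exp (Complex.I * t) - 1‖ ^ 2 ≤ t^2 := by
    rw [hsq, h2, h3]
    nlinarith [hs, hc, sq_nonneg (Real.sin (t/2)), sq_nonneg (Real.cos (t/2))]
  calc ‖Complex.exp (Complex.I * t) - 1‖ = Real.sqrt (‖Complex.exp (Complex.I * t) - 1‖^2) := by
        rw [Real.sqrt_sq (norm_nonneg _)]
    _ ≤ Real.sqrt (t^2) := Real.sqrt_le_sqrt hb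
    _ = |t| := Real.sqrt_sq_eq_abs t

lemma exp_integrable (μ : Measure ℝ) [IsFiniteMeasure μ] (ξ : ℝ) :
    Integrable (fun y : ℝ => Complex.exp (Complex.I * ξ * y)) μ := by
  apply Integrable.mono' (integrable_const (1:ℝ))
  · exact (Complex.continuous_exp.comp (by continuity)).aestronglyMeasurable
  · filter_upwards with y
    rw [Complex.norm_exp]
    simp [Complex.mul_re]

lemma abs_integrable (μ : Measure ℝ) [IsFiniteMeasure μ]
    (h : Integrable (fun y : ℝ => |y| ^ 4) μ) : Integrable (fun y : ℝ => |y|) μ := by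
  apply Integrable.mono' ((integrable_const (1:ℝ)).add h)
  · exact continuous_abs.aestronglyMeasurable
  · filter_upwards with y
    rw [Real.norm_eq_abs, abs_abs]
    simp only [Pi.add_apply]
    nlinarith [abs_nonneg y, sq_nonneg (|y|^2 - 1), sq_nonneg (|y| - 1), sq_nonneg (|y| + 1)]

lemma norm_integral_exp_le (μ : Measure ℝ) [IsFiniteMeasure μ] (ξ : ℝ) :
    ‖∫ y, Complex.exp (Complex.I * ξ * y) ∂μ‖ ≤ (μ Set.univ).toReal := by
  calc ‖∫ y, Complex.exp (Complex.I * ξ * y) ∂μ‖ ≤ ∫ y, ‖Complex.exp (Complex.I * ξ * y)‖ ∂μ :=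
        norm_integral_le_integral_norm _
    _ = ∫ _y, (1:ℝ) ∂μ := by
        congr 1; funext y
        rw [Complex.norm_exp]
        simp [Complex.mul_re]
    _ = (μ Set.univ).toReal := by simp [Measure.real]

lemma muHat_le_mass (μp μn : Measure ℝ) [IsFiniteMeasure μp] [IsFiniteMeasure μn] (ξ : ℝ) :
    ‖muHat μp μn ξ‖ ≤ (μp Set.univ).toReal + (μn Set.univ).toReal := by
  refine (norm_sub_le _ _).trans ?_
  exact add_le_add (norm_integral_exp_le μp ξ) (norm_integral_exp_le μn ξ)

lemma key_split (μ : Measure ℝ) [IsFiniteMeasure μ] (ξ : ℝ) :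
    ∫ y, Complex.exp (Complex.I * ξ * y) ∂μ
      = (∫ y, (Complex.exp (Complex.I * ξ * y) - 1) ∂μ) + ((μ Set.univ).toReal : ℂ) := by
  rw [integral_sub (exp_integrable μ ξ) (integrable_const 1), integral_const]
  simp [Measure.real]

lemma hbd_one (μ : Measure ℝ) [IsFiniteMeasure μ] (ξ : ℝ)
    (hint : Integrable (fun y : ℝ => |y|) μ) :
    ‖∫ y, (Complex.exp (Complex.I * ξ * y) - 1) ∂μ‖ ≤ |ξ| * ∫ y, |y| ∂μ := by
  calc ‖∫ y, (Complex.exp (Complex.I * ξ * y) - 1) ∂μ‖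
      ≤ ∫ y, ‖Complex.exp (Complex.I * ξ * y) - 1‖ ∂μ := norm_integral_le_integral_norm _
    _ ≤ ∫ y, |ξ| * |y| ∂μ := by
        have h1 : Integrable (fun y : ℝ => ‖Complex.exp (Complex.I * ξ * y) - 1‖) μ :=
          ((exp_integrable μ ξ).sub (integrable_const 1)).norm
        have h2 : Integrable (fun y : ℝ => |ξ| * |y|) μ := hint.const_mul _
        have hle : ∀ y : ℝ, ‖Complex.exp (Complex.I * ξ * y) - 1‖ ≤ |ξ| * |y| := by
          intro y
          have h := norm_exp_I_mul_sub_one_le (ξ * y)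
          rw [abs_mul] at h
          refine le_trans (le_of_eq ?_) h
          congr 2
          push_cast; ring
        exact integral_mono h1 h2 hle
    _ = |ξ| * ∫ y, |y| ∂μ := integral_const_mul _ _

lemma muHat_le_lin (μp μn : Measure ℝ) [IsFiniteMeasure μp] [IsFiniteMeasure μn]
    (hzero : μp Set.univ = μn Set.univ)
    (hp : Integrable (fun y : ℝ => |y|) μp) (hn : Integrable (fun y : ℝ => |y|) μn) (ξ : ℝ) :
    ‖muHat μp μn ξ‖ ≤ |ξ| * ((∫ y, |y| ∂μp) + ∫ y, |y| ∂μn) := by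
  have hEq : muHat μp μn ξ
      = (∫ y, (Complex.exp (Complex.I * ξ * y) - 1) ∂μp)
        - ∫ y, (Complex.exp (Complex.I * ξ * y) - 1) ∂μn := by
    rw [muHat, key_split μp ξ, key_split μn ξ, hzero]; ring
  rw [hEq, mul_add]
  refine (norm_sub_le _ _).trans ?_
  exact add_le_add (hbd_one μp ξ hp) (hbd_one μn ξ hn)

/-- `‖D_ε u‖_{β-α} ≤ C ε^{α-1} ‖u‖_β`, where `D_ε` acts as the Fourier multiplier
`ε^{-1} μ̂(εk)` and `μ = μp - μn` is a signed measure with `μ(ℝ) = 0`, `∫ x μ(dx) = 1`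
and finite fourth moment. -/
theorem stmt_7 (β α : ℝ) (hα : α ∈ Set.Icc (0 : ℝ) 1)
    (μp μn : Measure ℝ) [IsFiniteMeasure μp] [IsFiniteMeasure μn]
    (hzero : μp Set.univ = μn Set.univ)
    (hmean : (∫ y, y ∂μp) - ∫ y, y ∂μn = 1)
    (hmom : Integrable (fun y : ℝ => |y| ^ 4) (μp + μn)) :
    ∃ C > 0, ∀ ε ∈ Set.Ioc (0 : ℝ) 1, ∀ u : ℤ → ℂ,
      Summable (fun k : ℤ => (1 + (k : ℝ) ^ 2) ^ β * ‖u k‖ ^ 2) →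
      Summable (fun k : ℤ => (1 + (k : ℝ) ^ 2) ^ (β - α) *
        ‖((ε⁻¹ : ℝ) : ℂ) * muHat μp μn (ε * k) * u k‖ ^ 2) ∧
      Real.sqrt (sobNormSq (β - α) (fun k => ((ε⁻¹ : ℝ) : ℂ) * muHat μp μn (ε * k) * u k)) ≤
        C * ε ^ (α - 1) * Real.sqrt (sobNormSq β u) := by
  obtain ⟨hα0, hα1⟩ := hα
  have hp : Integrable (fun y : ℝ => |y|) μp :=
    abs_integrable μp (hmom.mono_measure (Measure.le_add_right le_rfl))
  have hn : Integrable (fun y : ℝ => |y|) μn :=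
    abs_integrable μn (hmom.mono_measure (Measure.le_add_left le_rfl))
  set L : ℝ := (∫ y, |y| ∂μp) + ∫ y, |y| ∂μn with hLdef
  set M : ℝ := (μp Set.univ).toReal + (μn Set.univ).toReal with hMdef
  have hL0 : 0 ≤ L := add_nonneg (integral_nonneg fun y => abs_nonneg y)
    (integral_nonneg fun y => abs_nonneg y)
  have hM0 : 0 ≤ M := add_nonneg ENNReal.toReal_nonneg ENNReal.toReal_nonneg
  set C : ℝ := (L + 1) ^ α * (M + 1) ^ (1 - α) with hCdef
  have hC : 0 < C := mul_pos (Real.rpow_pos_of_pos (by linarith) _)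
    (Real.rpow_pos_of_pos (by linarith) _)
  refine ⟨C, hC, ?_⟩
  rintro ε ⟨hε0, hε1⟩ u hsum
  set A : ℝ := C * ε ^ (α - 1) with hAdef
  have hA0 : 0 < A := mul_pos hC (Real.rpow_pos_of_pos hε0 _)
  -- pointwise multiplier bound
  have hmult : ∀ k : ℤ, ‖((ε⁻¹ : ℝ) : ℂ) * muHat μp μn (ε * k)‖ ≤
      A * (1 + (k : ℝ) ^ 2) ^ (α / 2) := by
    intro k
    have hpos : (0:ℝ) < 1 + (k : ℝ) ^ 2 := by positivity
    have hnorm : ‖((ε⁻¹ : ℝ) : ℂ) * muHat μp μn (ε * k)‖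
        = ε⁻¹ * ‖muHat μp μn (ε * k)‖ := by
      rw [norm_mul, Complex.norm_real, Real.norm_eq_abs, abs_of_pos (inv_pos.mpr hε0)]
    set r : ℝ := ε⁻¹ * ‖muHat μp μn (ε * k)‖ with hrdef
    have hr0 : 0 ≤ r := mul_nonneg (inv_nonneg.mpr hε0.le) (norm_nonneg _)
    have hr1 : r ≤ L * |(k : ℝ)| := by
      have h := muHat_le_lin μp μn hzero hp hn (ε * k)
      rw [abs_mul, abs_of_pos hε0, ← hLdef] at h
      have h2 := mul_le_mul_of_nonneg_left h (inv_nonneg.mpr hε0.le)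
      have h3 : ε⁻¹ * (ε * |(k:ℝ)| * L) = L * |(k:ℝ)| := by
        rw [show ε⁻¹ * (ε * |(k:ℝ)| * L) = (ε⁻¹ * ε) * (|(k:ℝ)| * L) from by ring,
          inv_mul_cancel₀ hε0.ne', one_mul, mul_comm]
      rw [hrdef]; rw [h3] at h2; exact h2
    have hr2 : r ≤ M / ε := by
      have h := muHat_le_mass μp μn (ε * k)
      rw [div_eq_inv_mul]
      exact mul_le_mul_of_nonneg_left h (inv_nonneg.mpr hε0.le)
    have hRHS0 : 0 ≤ A * (1 + (k : ℝ) ^ 2) ^ (α / 2) :=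
      mul_nonneg hA0.le (Real.rpow_nonneg hpos.le _)
    rw [hnorm]
    rcases eq_or_lt_of_le hr0 with h0 | hrpos
    · rw [← h0]; exact hRHS0
    have habs : |(k:ℝ)| ≤ Real.sqrt (1 + (k:ℝ)^2) := by
      rw [show |(k:ℝ)| = Real.sqrt ((k:ℝ)^2) from (Real.sqrt_sq_eq_abs _).symm]
      exact Real.sqrt_le_sqrt (by linarith)
    have hsqX : Real.sqrt (1 + (k:ℝ)^2) = (1 + (k:ℝ)^2) ^ ((1:ℝ)/2) := by
      rw [Real.sqrt_eq_rpow]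
    have hb1 : r ^ α ≤ ((L + 1) * (1 + (k:ℝ)^2) ^ ((1:ℝ)/2)) ^ α := by
      apply Real.rpow_le_rpow hr0 _ hα0
      rw [← hsqX]
      calc r ≤ L * |(k:ℝ)| := hr1
        _ ≤ (L + 1) * Real.sqrt (1 + (k:ℝ)^2) := by
            apply mul_le_mul (by linarith) habs (abs_nonneg _) (by linarith)
    have hb2 : r ^ (1 - α) ≤ ((M + 1) / ε) ^ (1 - α) := by
      apply Real.rpow_le_rpow hr0 _ (by linarith)
      calc r ≤ M / ε := hr2
        _ ≤ (M + 1) / ε := by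
            exact div_le_div_of_nonneg_right (by linarith) hε0.le
    have hX : ((1 + (k:ℝ)^2) ^ ((1:ℝ)/2)) ^ α = (1 + (k:ℝ)^2) ^ (α/2) := by
      rw [← Real.rpow_mul hpos.le]; ring_nf
    have hεpow : ((M + 1) / ε) ^ (1 - α) = (M + 1) ^ (1 - α) * ε ^ (α - 1) := by
      rw [Real.div_rpow (by linarith) hε0.le, div_eq_mul_inv, ← Real.rpow_neg hε0.le, neg_sub]
    calc r = r ^ α * r ^ (1 - α) := by rw [← Real.rpow_add hrpos]; norm_num
      _ ≤ ((L + 1) * (1 + (k:ℝ)^2) ^ ((1:ℝ)/2)) ^ α * ((M + 1) / ε) ^ (1 - α) :=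
          mul_le_mul hb1 hb2 (Real.rpow_nonneg hr0 _) (Real.rpow_nonneg (by positivity) _)
      _ = A * (1 + (k : ℝ) ^ 2) ^ (α / 2) := by
          rw [Real.mul_rpow (by linarith) (Real.rpow_nonneg hpos.le _), hX, hεpow,
            hAdef, hCdef]
          ring
  -- per-term squared bound
  have hterm : ∀ k : ℤ, (1 + (k:ℝ)^2) ^ (β - α) *
      ‖((ε⁻¹ : ℝ) : ℂ) * muHat μp μn (ε * k) * u k‖ ^ 2
      ≤ A ^ 2 * ((1 + (k:ℝ)^2) ^ β * ‖u k‖ ^ 2) := by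
    intro k
    have hpos : (0:ℝ) < 1 + (k : ℝ) ^ 2 := by positivity
    have hB2 : ((1 + (k:ℝ)^2) ^ (α/2)) ^ 2 = (1 + (k:ℝ)^2) ^ α := by
      rw [← Real.rpow_natCast ((1 + (k:ℝ)^2) ^ (α/2)) 2, ← Real.rpow_mul hpos.le]
      norm_num
    have h1 : ‖((ε⁻¹ : ℝ) : ℂ) * muHat μp μn (ε * k) * u k‖ ^ 2
        ≤ (A ^ 2 * (1 + (k:ℝ)^2) ^ α) * ‖u k‖ ^ 2 := by
      rw [norm_mul, mul_pow]
      apply mul_le_mul_of_nonneg_right _ (by positivity)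
      calc ‖((ε⁻¹ : ℝ) : ℂ) * muHat μp μn (ε * k)‖ ^ 2
          ≤ (A * (1 + (k:ℝ)^2) ^ (α/2)) ^ 2 :=
            pow_le_pow_left₀ (norm_nonneg _) (hmult k) 2
        _ = A ^ 2 * (1 + (k:ℝ)^2) ^ α := by rw [mul_pow, hB2]
    calc (1 + (k:ℝ)^2) ^ (β - α) * ‖((ε⁻¹ : ℝ) : ℂ) * muHat μp μn (ε * k) * u k‖ ^ 2
        ≤ (1 + (k:ℝ)^2) ^ (β - α) * ((A ^ 2 * (1 + (k:ℝ)^2) ^ α) * ‖u k‖ ^ 2) :=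
          mul_le_mul_of_nonneg_left h1 (Real.rpow_nonneg hpos.le _)
      _ = A ^ 2 * (((1 + (k:ℝ)^2) ^ (β - α) * (1 + (k:ℝ)^2) ^ α) * ‖u k‖ ^ 2) := by ring
      _ = A ^ 2 * ((1 + (k:ℝ)^2) ^ β * ‖u k‖ ^ 2) := by
          rw [← Real.rpow_add hpos, sub_add_cancel]
  have hsum2 : Summable (fun k : ℤ => (1 + (k:ℝ)^2) ^ (β - α) *
      ‖((ε⁻¹ : ℝ) : ℂ) * muHat μp μn (ε * k) * u k‖ ^ 2) :=
    Summable.of_nonneg_of_le (fun k => by positivity) hterm (hsum.mul_left (A^2))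
  refine ⟨hsum2, ?_⟩
  have hts : sobNormSq (β - α) (fun k => ((ε⁻¹ : ℝ) : ℂ) * muHat μp μn (ε * k) * u k)
      ≤ A ^ 2 * sobNormSq β u := by
    rw [sobNormSq, sobNormSq, ← tsum_mul_left]
    exact Summable.tsum_le_tsum hterm hsum2 (hsum.mul_left _)
  calc Real.sqrt (sobNormSq (β - α) (fun k => ((ε⁻¹ : ℝ) : ℂ) * muHat μp μn (ε * k) * u k))
      ≤ Real.sqrt (A ^ 2 * sobNormSq β u) := Real.sqrt_le_sqrt hts
    _ = A * Real.sqrt (sobNormSq β u) := by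
        rw [Real.sqrt_mul (sq_nonneg A), Real.sqrt_sq hA0.le]
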